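/- Let F(x) = d₁x + α and G(x) = d₂x + β with d₁, d₂ ∈ ℤ, d₁ ≠ d₂, d₂ ≠ 1, κ := β(d₁-1) - α(d₂-1) ∈ ℤ. Let x₀ = (m + β - α)/(d₁ - d₂) for m ∈ ℤ, and define the alternating orbit x₁ = F(x₀), x₂ = G(x₁), x₃ = F(x₂), x₄ = G(x₃), .... Then for all n ≥ 0, xₙ - (d₂ⁿ m + κ(1 - d₂ⁿ)/(1 - d₂) + β - α)/(d₁ - d₂) ∈ ℤ. -/
import Mathlib


theorem alternating_orbit_formula (d₁ d₂ : ℤ) (hd : d₁ ≠ d₂) (hd₂ : d₂ ≠ 1) (α β : ℝ)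
    (κ : ℤ) (hκ : (κ : ℝ) = β * (d₁ - 1) - α * (d₂ - 1))
    (F G : ℝ → ℝ) (hF : ∀ y, F y = d₁ * y + α) (hG : ∀ y, G y = d₂ * y + β)
    (m : ℤ) (x : ℕ → ℝ) (hx0 : x 0 = (m + β - α) / (d₁ - d₂))
    (hx : ∀ n : ℕ, x (n + 1) = if Even n then F (x n) else G (x n)) :
    ∀ n : ℕ, ∃ k : ℤ,
      x n - ((d₂ ^ n * m + κ * (∑ i ∈ Finset.range n, d₂ ^ i) + β - α) / (d₁ - d₂)) = k := by
  have hD : (d₁ : ℝ) - d₂ ≠ 0 := sub_ne_zero.mpr (by exact_mod_cast hd)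
  intro n
  induction n with
  | zero =>
    exact ⟨0, by simp [hx0]⟩
  | succ n ih =>
    obtain ⟨k, hk⟩ := ih
    push_cast at hk
    have hxn : x n = k + ((d₂ ^ n * m + κ * (∑ i ∈ Finset.range n, (d₂:ℝ) ^ i) + β - α) / (d₁ - d₂)) := by
      linarith [hk]
    have hS : (∑ i ∈ Finset.range n, (d₂:ℝ) ^ i) * ((d₂:ℝ) - 1) = (d₂:ℝ) ^ n - 1 :=
      geom_sum_mul _ n
    have hsum : (∑ i ∈ Finset.range (n+1), (d₂:ℝ) ^ i)
        = (∑ i ∈ Finset.range n, (d₂:ℝ) ^ i) + (d₂:ℝ) ^ n := Finset.sum_range_succ _ n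
    rw [hx n]
    by_cases h : Even n
    · refine ⟨d₁ * k + d₂ ^ n * m + κ * (∑ i ∈ Finset.range n, d₂ ^ i), ?_⟩
      rw [if_pos h, hF, hxn]
      push_cast
      rw [hsum]
      field_simp
      linear_combination (κ:ℝ) * hS - hκ
    · refine ⟨d₂ * k, ?_⟩
      rw [if_neg h, hG, hxn]
      push_cast
      rw [hsum]
      field_simp
      linear_combination (κ:ℝ) * hS - hκ
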